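/- arXiv:2307.02972 — 2 statements merged into one kernel-verified Lean document; each statement's English description precedes it below -/
import Mathlib

section
/- Let α₁ > 0, α₂ > 0, α₃ > 0 be real parameters and define the isotropic passive strain energy Ψ_p,isot(C) = α₁(I₁(C)·I₃(C)^{−1/3} − 3) + α₂(I₃(C)^{α₃} + I₃(C)^{−α₃} − 2). Then Ψ_p,isot(C) ≥ 0 for every real symmetric positive definite 3×3 matrix C, and Ψ_p,isot(C) = 0 if and only if C is the identity matrix; in particular the energy vanishes exactly in the undeformed reference configuration. -/
open Matrix

lemma amgm_eq3 (a b c : ℝ) (ha : 0 < a) (hb : 0 < b) (hc : 0 < c)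
    (hs : a + b + c = 3) (hp : a * b * c = 1) : a = 1 ∧ b = 1 ∧ c = 1 := by
  have hq : a*b + b*c + a*c ≥ 3 := by
    nlinarith [sq_nonneg (a*b - b*c), sq_nonneg (b*c - a*c), sq_nonneg (a*b - a*c),
      mul_pos ha hb, mul_pos hb hc, mul_pos ha hc]
  have hab : a = b := by nlinarith [sq_nonneg (a-b), sq_nonneg (b-c), sq_nonneg (a-c)]
  have hbc : b = c := by nlinarith [sq_nonneg (a-b), sq_nonneg (b-c), sq_nonneg (a-c)]
  refine ⟨?_, ?_, ?_⟩ <;> nlinarith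

lemma trace_eq_sum_eig (C : Matrix (Fin 3) (Fin 3) ℝ) (h : C.IsHermitian) :
    C.trace = ∑ i, h.eigenvalues i := by
  conv_lhs => rw [h.spectral_theorem]
  rw [Unitary.conjStarAlgAut_apply, Matrix.trace_mul_cycle]
  simp [Matrix.mem_unitaryGroup_iff'.mp (h.eigenvectorUnitary).2, Matrix.trace_diagonal]

/-- The isotropic passive strain energy
`Ψ(C) = α₁ (I₁ I₃^(-1/3) − 3) + α₂ (I₃^α₃ + I₃^(−α₃) − 2)` is nonnegative on symmetric
positive definite matrices and vanishes exactly at the identity. -/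
theorem isotropic_passive_energy_nonneg_eq_zero_iff_id
    (α₁ α₂ α₃ : ℝ) (h₁ : 0 < α₁) (h₂ : 0 < α₂) (h₃ : 0 < α₃)
    (C : Matrix (Fin 3) (Fin 3) ℝ) (hC : C.PosDef) :
    0 ≤ α₁ * (C.trace * C.det ^ (-(1 : ℝ) / 3) - 3) +
        α₂ * (C.det ^ α₃ + C.det ^ (-α₃) - 2) ∧
      (α₁ * (C.trace * C.det ^ (-(1 : ℝ) / 3) - 3) +
          α₂ * (C.det ^ α₃ + C.det ^ (-α₃) - 2) = 0 ↔
        C = (1 : Matrix (Fin 3) (Fin 3) ℝ)) := by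
  have hH := hC.isHermitian
  set lam := hH.eigenvalues with hlam
  have hpos : ∀ i, 0 < lam i := hC.eigenvalues_pos
  have hd : 0 < C.det := hC.det_pos
  have htr : C.trace = lam 0 + lam 1 + lam 2 := by
    rw [trace_eq_sum_eig C hH, Fin.sum_univ_three]
  have hdet : C.det = lam 0 * lam 1 * lam 2 := by
    have := hH.det_eq_prod_eigenvalues
    rw [this, Fin.prod_univ_three]
    norm_num
    rfl
  -- first term nonneg
  have hcube : C.det ^ ((1:ℝ)/3) ≤ C.trace / 3 := by
    have := Real.geom_mean_le_arith_mean3_weighted (by norm_num : (0:ℝ) ≤ 1/3)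
      (by norm_num : (0:ℝ) ≤ 1/3) (by norm_num : (0:ℝ) ≤ 1/3)
      (hpos 0).le (hpos 1).le (hpos 2).le (by norm_num)
    rw [hdet, htr]
    calc (lam 0 * lam 1 * lam 2) ^ ((1:ℝ)/3)
        = lam 0 ^ ((1:ℝ)/3) * lam 1 ^ ((1:ℝ)/3) * lam 2 ^ ((1:ℝ)/3) := by
          rw [Real.mul_rpow (mul_nonneg (hpos 0).le (hpos 1).le) (hpos 2).le,
            Real.mul_rpow (hpos 0).le (hpos 1).le]
      _ ≤ 1/3 * lam 0 + 1/3 * lam 1 + 1/3 * lam 2 := this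
      _ = (lam 0 + lam 1 + lam 2) / 3 := by ring
  have hmulinv : C.det ^ ((1:ℝ)/3) * C.det ^ (-(1:ℝ)/3) = 1 := by
    rw [← Real.rpow_add hd]; norm_num
  have hinvpos : 0 < C.det ^ (-(1:ℝ)/3) := Real.rpow_pos_of_pos hd _
  have hA : 0 ≤ C.trace * C.det ^ (-(1:ℝ)/3) - 3 := by
    have := mul_le_mul_of_nonneg_right hcube hinvpos.le
    rw [hmulinv, div_mul_eq_mul_div] at this
    linarith
  -- second term nonneg
  set t := C.det ^ α₃ with ht
  have htpos : 0 < t := Real.rpow_pos_of_pos hd _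
  have htinv : C.det ^ (-α₃) = t⁻¹ := by rw [Real.rpow_neg hd.le]
  have httinv : t * t⁻¹ = 1 := mul_inv_cancel₀ htpos.ne'
  have hB : 0 ≤ C.det ^ α₃ + C.det ^ (-α₃) - 2 := by
    rw [htinv, ← ht]
    nlinarith [sq_nonneg (t - 1), mul_pos htpos (inv_pos.mpr htpos)]
  have hA' : 0 ≤ α₁ * (C.trace * C.det ^ (-(1:ℝ)/3) - 3) := mul_nonneg h₁.le hA
  have hB' : 0 ≤ α₂ * (C.det ^ α₃ + C.det ^ (-α₃) - 2) := mul_nonneg h₂.le hB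
  refine ⟨by linarith, ?_, ?_⟩
  · intro hzero
    have hAz : C.trace * C.det ^ (-(1:ℝ)/3) - 3 = 0 := by
      have : α₁ * (C.trace * C.det ^ (-(1:ℝ)/3) - 3) = 0 := by linarith
      exact (mul_eq_zero.mp this).resolve_left h₁.ne'
    have hBz : C.det ^ α₃ + C.det ^ (-α₃) - 2 = 0 := by
      have : α₂ * (C.det ^ α₃ + C.det ^ (-α₃) - 2) = 0 := by linarith
      exact (mul_eq_zero.mp this).resolve_left h₂.ne'
    -- det = 1
    have ht1 : t = 1 := by
      rw [htinv, ← ht] at hBz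
      have hsq : (t - 1)^2 = 0 := by nlinarith
      have := pow_eq_zero_iff (n := 2) (by norm_num) |>.mp hsq
      linarith
    have hdet1 : C.det = 1 := by
      have : (C.det ^ α₃) ^ (α₃⁻¹) = C.det := by
        rw [← Real.rpow_mul hd.le, mul_inv_cancel₀ h₃.ne', Real.rpow_one]
      rw [← this, ← ht, ht1, Real.one_rpow]
    -- trace = 3
    have htr3 : C.trace = 3 := by
      rw [hdet1, Real.one_rpow, mul_one] at hAz
      linarith
    have key := amgm_eq3 (lam 0) (lam 1) (lam 2) (hpos 0) (hpos 1) (hpos 2)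
      (by rw [← htr]; exact htr3) (by rw [← hdet]; exact hdet1)
    have heig : lam = fun _ => 1 := by
      funext i; fin_cases i <;> simp [key.1, key.2.1, key.2.2]
    -- spectral theorem
    have := hH.spectral_theorem
    rw [← hlam, heig] at this
    rw [this]
    have : (diagonal (RCLike.ofReal ∘ fun _ : Fin 3 => (1:ℝ)) : Matrix (Fin 3) (Fin 3) ℝ) = 1 := by
      simp [Function.comp, diagonal_one]
    rw [this, map_one]
  · rintro rfl
    rw [ht]
    simp [Matrix.trace_one, Matrix.det_one, Real.one_rpow]
    norm_num
end

section
/- Let k₁, …, k₇ : [0, T] → ℝ be continuous and nonnegative, and let n = (n_A, n_B, n_C, n_D) : [0, T] → ℝ⁴ be differentiable and satisfy the Hai–Murphy cross-bridge system. If n(0) has nonnegative components with n_A(0) + n_B(0) + n_C(0) + n_D(0) = 1, then for every t ∈ [0, T] all components of n(t) lie in [0, 1] and n_A(t) + n_B(t) + n_C(t) + n_D(t) = 1; i.e., the probability simplex is forward invariant under the cross-bridge dynamics. -/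
open Set

lemma posPartSq_hasDerivAt (x : ℝ) :
    HasDerivAt (fun y : ℝ => max y 0 ^ 2) (2 * max x 0) x := by
  rcases lt_trichotomy x 0 with h | h | h
  · have hev : (fun y : ℝ => max y 0 ^ 2) =ᶠ[nhds x] (fun _ => (0:ℝ)) := by
      filter_upwards [Iio_mem_nhds h] with y hy
      simp [max_eq_right (le_of_lt (mem_Iio.mp hy))]
    have h0 : HasDerivAt (fun _ : ℝ => (0:ℝ)) 0 x := hasDerivAt_const x 0
    have := h0.congr_of_eventuallyEq hev
    simpa [max_eq_right h.le] using this
  · subst h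
    rw [hasDerivAt_iff_isLittleO, Asymptotics.isLittleO_iff]
    intro c hc
    filter_upwards [Metric.ball_mem_nhds (0:ℝ) hc] with y hy
    have hy' : |y| < c := by simpa [Real.dist_eq] using hy
    have h1 : max y 0 ≤ |y| := max_le (le_abs_self y) (abs_nonneg y)
    have h2 : (0:ℝ) ≤ max y 0 := le_max_right _ _
    simp only [smul_eq_mul, mul_zero, sub_zero, Real.norm_eq_abs, max_self,
      ne_eq, OfNat.ofNat_ne_zero, not_false_eq_true, zero_pow]
    rw [abs_of_nonneg (by positivity : (0:ℝ) ≤ max y 0 ^ 2)]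
    nlinarith [abs_nonneg y]
  · have hev : (fun y : ℝ => max y 0 ^ 2) =ᶠ[nhds x] (fun y => y ^ 2) := by
      filter_upwards [Ioi_mem_nhds h] with y hy
      simp [max_eq_left (le_of_lt (mem_Ioi.mp hy))]
    have h0 : HasDerivAt (fun y : ℝ => y ^ 2) (2 * x) x := by
      simpa using hasDerivAt_pow 2 x
    have := h0.congr_of_eventuallyEq hev
    simpa [max_eq_left h.le] using this

lemma negPart_mul_self (a : ℝ) : max (-a) 0 * a = -(max (-a) 0 ^ 2) := by
  rcases le_total a 0 with h | h
  · rw [max_eq_left (by linarith)]; ring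
  · rw [max_eq_right (by linarith)]; ring

lemma cross_bound {k M p q y : ℝ} (hk : 0 ≤ k) (hkM : k ≤ M)
    (hp : 0 ≤ p) (hq : 0 ≤ q) (hqy : -y ≤ q) :
    -(2 * (k * (p * y))) ≤ M * (p ^ 2 + q ^ 2) := by
  nlinarith [mul_nonneg hk (mul_nonneg hp (by linarith : (0:ℝ) ≤ q + y)),
    mul_nonneg (by linarith : (0:ℝ) ≤ M - k) (mul_nonneg hp hq),
    mul_nonneg (le_trans hk hkM) (sq_nonneg (p - q))]


lemma gd_bound (k1 k2 k3 k4 k5 k6 k7 M a b c d : ℝ)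
    (n1 : 0 ≤ k1) (n2 : 0 ≤ k2) (n3 : 0 ≤ k3) (n4 : 0 ≤ k4) (n5 : 0 ≤ k5)
    (n6 : 0 ≤ k6) (n7 : 0 ≤ k7)
    (m1 : k1 ≤ M) (m2 : k2 ≤ M) (m3 : k3 ≤ M) (m4 : k4 ≤ M) (m5 : k5 ≤ M)
    (m6 : k6 ≤ M) (m7 : k7 ≤ M) (hM0 : 0 ≤ M) :
    2 * max (-a) 0 * (-(-k1 * a + k2 * b + k7 * d)) +
    2 * max (-b) 0 * (-(k1 * a - (k2 + k3) * b + k4 * c)) +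
    2 * max (-c) 0 * (-(k3 * b - (k4 + k5) * c + k6 * d)) +
    2 * max (-d) 0 * (-(k5 * c - (k6 + k7) * d)) ≤
    (7 * M) * (max (-a) 0 ^ 2 + max (-b) 0 ^ 2 + max (-c) 0 ^ 2 + max (-d) 0 ^ 2) + 0 := by
  set pa := max (-a) 0 with hpa; set pb := max (-b) 0 with hpb
  set pc := max (-c) 0 with hpc; set pd := max (-d) 0 with hpd
  have hpa0 : 0 ≤ pa := le_max_right _ _
  have hpb0 : 0 ≤ pb := le_max_right _ _
  have hpc0 : 0 ≤ pc := le_max_right _ _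
  have hpd0 : 0 ≤ pd := le_max_right _ _
  have hpaa : pa * a = -(pa ^ 2) := negPart_mul_self a
  have hpbb : pb * b = -(pb ^ 2) := negPart_mul_self b
  have hpcc : pc * c = -(pc ^ 2) := negPart_mul_self c
  have hpdd : pd * d = -(pd ^ 2) := negPart_mul_self d
  have hya : -a ≤ pa := le_max_left _ _
  have hyb : -b ≤ pb := le_max_left _ _
  have hyc : -c ≤ pc := le_max_left _ _
  have hyd : -d ≤ pd := le_max_left _ _
  have c1 : -(2 * (k2 * (pa * b))) ≤ M * (pa ^ 2 + pb ^ 2) :=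
    cross_bound n2 m2 hpa0 hpb0 hyb
  have c2 : -(2 * (k7 * (pa * d))) ≤ M * (pa ^ 2 + pd ^ 2) :=
    cross_bound n7 m7 hpa0 hpd0 hyd
  have c3 : -(2 * (k1 * (pb * a))) ≤ M * (pb ^ 2 + pa ^ 2) :=
    cross_bound n1 m1 hpb0 hpa0 hya
  have c4 : -(2 * (k4 * (pb * c))) ≤ M * (pb ^ 2 + pc ^ 2) :=
    cross_bound n4 m4 hpb0 hpc0 hyc
  have c5 : -(2 * (k3 * (pc * b))) ≤ M * (pc ^ 2 + pb ^ 2) :=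
    cross_bound n3 m3 hpc0 hpb0 hyb
  have c6 : -(2 * (k6 * (pc * d))) ≤ M * (pc ^ 2 + pd ^ 2) :=
    cross_bound n6 m6 hpc0 hpd0 hyd
  have c7 : -(2 * (k5 * (pd * c))) ≤ M * (pd ^ 2 + pc ^ 2) :=
    cross_bound n5 m5 hpd0 hpc0 hyc
  have s1 : 0 ≤ k1 * pa ^ 2 := mul_nonneg n1 (sq_nonneg _)
  have s2 : 0 ≤ (k2 + k3) * pb ^ 2 := mul_nonneg (by linarith) (sq_nonneg _)
  have s3 : 0 ≤ (k4 + k5) * pc ^ 2 := mul_nonneg (by linarith) (sq_nonneg _)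
  have s4 : 0 ≤ (k6 + k7) * pd ^ 2 := mul_nonneg (by linarith) (sq_nonneg _)
  have e1 : pa * (k1 * a) = -(k1 * pa ^ 2) := by
    rw [show pa * (k1 * a) = k1 * (pa * a) by ring, hpaa]; ring
  have e2 : pb * ((k2 + k3) * b) = -((k2 + k3) * pb ^ 2) := by
    rw [show pb * ((k2 + k3) * b) = (k2 + k3) * (pb * b) by ring, hpbb]; ring
  have e3 : pc * ((k4 + k5) * c) = -((k4 + k5) * pc ^ 2) := by
    rw [show pc * ((k4 + k5) * c) = (k4 + k5) * (pc * c) by ring, hpcc]; ring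
  have e4 : pd * ((k6 + k7) * d) = -((k6 + k7) * pd ^ 2) := by
    rw [show pd * ((k6 + k7) * d) = (k6 + k7) * (pd * d) by ring, hpdd]; ring
  have f1 : 0 ≤ M * pa ^ 2 := mul_nonneg hM0 (sq_nonneg _)
  have f2 : 0 ≤ M * pb ^ 2 := mul_nonneg hM0 (sq_nonneg _)
  have f3 : 0 ≤ M * pc ^ 2 := mul_nonneg hM0 (sq_nonneg _)
  have f4 : 0 ≤ M * pd ^ 2 := mul_nonneg hM0 (sq_nonneg _)
  linarith [c1, c2, c3, c4, c5, c6, c7, s1, s2, s3, s4, e1, e2, e3, e4,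
    f1, f2, f3, f4]

/-- Forward invariance of the probability simplex under the Hai–Murphy cross-bridge
dynamics: if the rate coefficients are continuous and nonnegative on `[0, T]` and the
initial state lies in the simplex, then for all `t ∈ [0, T]` all components of the
solution lie in `[0, 1]` and sum to `1`. -/
theorem haiMurphy_simplex_forward_invariant
    (T : ℝ) (hT : 0 ≤ T) (k₁ k₂ k₃ k₄ k₅ k₆ k₇ : ℝ → ℝ)
    (hk₁c : ContinuousOn k₁ (Set.Icc 0 T)) (hk₂c : ContinuousOn k₂ (Set.Icc 0 T))
    (hk₃c : ContinuousOn k₃ (Set.Icc 0 T)) (hk₄c : ContinuousOn k₄ (Set.Icc 0 T))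
    (hk₅c : ContinuousOn k₅ (Set.Icc 0 T)) (hk₆c : ContinuousOn k₆ (Set.Icc 0 T))
    (hk₇c : ContinuousOn k₇ (Set.Icc 0 T))
    (hk₁ : ∀ t ∈ Set.Icc 0 T, 0 ≤ k₁ t) (hk₂ : ∀ t ∈ Set.Icc 0 T, 0 ≤ k₂ t)
    (hk₃ : ∀ t ∈ Set.Icc 0 T, 0 ≤ k₃ t) (hk₄ : ∀ t ∈ Set.Icc 0 T, 0 ≤ k₄ t)
    (hk₅ : ∀ t ∈ Set.Icc 0 T, 0 ≤ k₅ t) (hk₆ : ∀ t ∈ Set.Icc 0 T, 0 ≤ k₆ t)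
    (hk₇ : ∀ t ∈ Set.Icc 0 T, 0 ≤ k₇ t)
    (nA nB nC nD : ℝ → ℝ)
    (hA : ∀ t ∈ Set.Icc 0 T,
      HasDerivWithinAt nA (-(k₁ t) * nA t + k₂ t * nB t + k₇ t * nD t) (Set.Icc 0 T) t)
    (hB : ∀ t ∈ Set.Icc 0 T,
      HasDerivWithinAt nB (k₁ t * nA t - (k₂ t + k₃ t) * nB t + k₄ t * nC t)
        (Set.Icc 0 T) t)
    (hCd : ∀ t ∈ Set.Icc 0 T,
      HasDerivWithinAt nC (k₃ t * nB t - (k₄ t + k₅ t) * nC t + k₆ t * nD t)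
        (Set.Icc 0 T) t)
    (hD : ∀ t ∈ Set.Icc 0 T,
      HasDerivWithinAt nD (k₅ t * nC t - (k₆ t + k₇ t) * nD t) (Set.Icc 0 T) t)
    (hA0 : 0 ≤ nA 0) (hB0 : 0 ≤ nB 0) (hC0 : 0 ≤ nC 0) (hD0 : 0 ≤ nD 0)
    (hsum0 : nA 0 + nB 0 + nC 0 + nD 0 = 1) :
    ∀ t ∈ Set.Icc 0 T,
      nA t ∈ Set.Icc (0 : ℝ) 1 ∧ nB t ∈ Set.Icc (0 : ℝ) 1 ∧
      nC t ∈ Set.Icc (0 : ℝ) 1 ∧ nD t ∈ Set.Icc (0 : ℝ) 1 ∧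
      nA t + nB t + nC t + nD t = 1 := by
  have h0T : (0:ℝ) ∈ Set.Icc 0 T := ⟨le_refl 0, hT⟩
  -- continuity of solutions
  have hAc : ContinuousOn nA (Icc 0 T) := fun t ht => (hA t ht).continuousWithinAt
  have hBc : ContinuousOn nB (Icc 0 T) := fun t ht => (hB t ht).continuousWithinAt
  have hCc : ContinuousOn nC (Icc 0 T) := fun t ht => (hCd t ht).continuousWithinAt
  have hDc : ContinuousOn nD (Icc 0 T) := fun t ht => (hD t ht).continuousWithinAt
  -- Step 1: the sum is constant, equal to 1
  have hS : ∀ s ∈ Set.Icc 0 T, nA s + nB s + nC s + nD s = 1 := by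
    have hderiv : ∀ x ∈ Set.Ico 0 T,
        HasDerivWithinAt (fun s => nA s + nB s + nC s + nD s) 0 (Set.Ici x) x := by
      intro x hx
      have hx' : x ∈ Set.Icc 0 T := Set.Ico_subset_Icc_self hx
      have h1 := (((hA x hx').add (hB x hx')).add (hCd x hx')).add (hD x hx')
      have h2 := h1.mono_of_mem_nhdsWithin (Icc_mem_nhdsGE_of_mem hx)
      exact h2.congr_deriv (by ring)
    have hcont : ContinuousOn (fun s => nA s + nB s + nC s + nD s) (Icc 0 T) :=
      ((hAc.add hBc).add hCc).add hDc
    have hconst := constant_of_has_deriv_right_zero hcont hderiv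
    intro s hs
    exact (hconst s hs).trans hsum0
  -- Step 2: bound the rates
  obtain ⟨M₁, hM₁⟩ := (isCompact_Icc).exists_bound_of_continuousOn hk₁c
  obtain ⟨M₂, hM₂⟩ := (isCompact_Icc).exists_bound_of_continuousOn hk₂c
  obtain ⟨M₃, hM₃⟩ := (isCompact_Icc).exists_bound_of_continuousOn hk₃c
  obtain ⟨M₄, hM₄⟩ := (isCompact_Icc).exists_bound_of_continuousOn hk₄c
  obtain ⟨M₅, hM₅⟩ := (isCompact_Icc).exists_bound_of_continuousOn hk₅c
  obtain ⟨M₆, hM₆⟩ := (isCompact_Icc).exists_bound_of_continuousOn hk₆c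
  obtain ⟨M₇, hM₇⟩ := (isCompact_Icc).exists_bound_of_continuousOn hk₇c
  set M : ℝ := |M₁| + |M₂| + |M₃| + |M₄| + |M₅| + |M₆| + |M₇| with hMdef
  have hM0 : 0 ≤ M := by positivity
  have hbnd : ∀ t ∈ Icc (0:ℝ) T, k₁ t ≤ M ∧ k₂ t ≤ M ∧ k₃ t ≤ M ∧ k₄ t ≤ M ∧
      k₅ t ≤ M ∧ k₆ t ≤ M ∧ k₇ t ≤ M := by
    intro t ht
    have b1 := hM₁ t ht; have b2 := hM₂ t ht; have b3 := hM₃ t ht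
    have b4 := hM₄ t ht; have b5 := hM₅ t ht; have b6 := hM₆ t ht
    have b7 := hM₇ t ht
    rw [Real.norm_eq_abs] at b1 b2 b3 b4 b5 b6 b7
    have d1 : k₁ t ≤ |M₁| := (le_abs_self _).trans (b1.trans (le_abs_self _))
    have d2 : k₂ t ≤ |M₂| := (le_abs_self _).trans (b2.trans (le_abs_self _))
    have d3 : k₃ t ≤ |M₃| := (le_abs_self _).trans (b3.trans (le_abs_self _))
    have d4 : k₄ t ≤ |M₄| := (le_abs_self _).trans (b4.trans (le_abs_self _))
    have d5 : k₅ t ≤ |M₅| := (le_abs_self _).trans (b5.trans (le_abs_self _))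
    have d6 : k₆ t ≤ |M₆| := (le_abs_self _).trans (b6.trans (le_abs_self _))
    have d7 : k₇ t ≤ |M₇| := (le_abs_self _).trans (b7.trans (le_abs_self _))
    have e1 := abs_nonneg M₁; have e2 := abs_nonneg M₂; have e3 := abs_nonneg M₃
    have e4 := abs_nonneg M₄; have e5 := abs_nonneg M₅; have e6 := abs_nonneg M₆
    have e7 := abs_nonneg M₇
    refine ⟨by simp only [hMdef]; linarith, by simp only [hMdef]; linarith,
      by simp only [hMdef]; linarith, by simp only [hMdef]; linarith,
      by simp only [hMdef]; linarith, by simp only [hMdef]; linarith,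
      by simp only [hMdef]; linarith⟩
  -- Step 3: negative parts
  set q : ℝ → ℝ := fun y => max (-y) 0 ^ 2 with hq
  set g : ℝ → ℝ := fun s => q (nA s) + q (nB s) + q (nC s) + q (nD s) with hg
  have hqc : Continuous q := by
    apply Continuous.pow
    exact (continuous_neg.max continuous_const)
  have hgc : ContinuousOn g (Icc 0 T) :=
    (((hqc.comp_continuousOn hAc).add (hqc.comp_continuousOn hBc)).add
      (hqc.comp_continuousOn hCc)).add (hqc.comp_continuousOn hDc)
  -- derivative of g
  set gd : ℝ → ℝ := fun s =>
    2 * max (-(nA s)) 0 * (-(-(k₁ s) * nA s + k₂ s * nB s + k₇ s * nD s)) +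
    2 * max (-(nB s)) 0 * (-(k₁ s * nA s - (k₂ s + k₃ s) * nB s + k₄ s * nC s)) +
    2 * max (-(nC s)) 0 * (-(k₃ s * nB s - (k₄ s + k₅ s) * nC s + k₆ s * nD s)) +
    2 * max (-(nD s)) 0 * (-(k₅ s * nC s - (k₆ s + k₇ s) * nD s)) with hgd
  have hgderiv : ∀ x ∈ Ico (0:ℝ) T, HasDerivWithinAt g (gd x) (Ici x) x := by
    intro x hx
    have hx' : x ∈ Icc (0:ℝ) T := Ico_subset_Icc_self hx
    have hAx := ((hA x hx').mono_of_mem_nhdsWithin (Icc_mem_nhdsGE_of_mem hx)).neg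
    have hBx := ((hB x hx').mono_of_mem_nhdsWithin (Icc_mem_nhdsGE_of_mem hx)).neg
    have hCx := ((hCd x hx').mono_of_mem_nhdsWithin (Icc_mem_nhdsGE_of_mem hx)).neg
    have hDx := ((hD x hx').mono_of_mem_nhdsWithin (Icc_mem_nhdsGE_of_mem hx)).neg
    have qA := (posPartSq_hasDerivAt (-(nA x))).comp_hasDerivWithinAt x hAx
    have qB := (posPartSq_hasDerivAt (-(nB x))).comp_hasDerivWithinAt x hBx
    have qC := (posPartSq_hasDerivAt (-(nC x))).comp_hasDerivWithinAt x hCx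
    have qD := (posPartSq_hasDerivAt (-(nD x))).comp_hasDerivWithinAt x hDx
    exact ((qA.add qB).add qC).add qD
  -- derivative bound
  have hbound : ∀ x ∈ Ico (0:ℝ) T, gd x ≤ (7 * M) * g x + 0 := by
    intro x hx
    have hx' : x ∈ Icc (0:ℝ) T := Ico_subset_Icc_self hx
    obtain ⟨m1, m2, m3, m4, m5, m6, m7⟩ := hbnd x hx'
    simp only [hgd, hg, hq]
    have := gd_bound (k₁ x) (k₂ x) (k₃ x) (k₄ x) (k₅ x) (k₆ x) (k₇ x) M
      (nA x) (nB x) (nC x) (nD x) (hk₁ x hx') (hk₂ x hx') (hk₃ x hx')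
      (hk₄ x hx') (hk₅ x hx') (hk₆ x hx') (hk₇ x hx') m1 m2 m3 m4 m5 m6 m7 hM0
    linarith
  -- g 0 = 0
  have hg0 : g 0 = 0 := by
    simp only [hg, hq]
    rw [max_eq_right (by linarith), max_eq_right (by linarith),
      max_eq_right (by linarith), max_eq_right (by linarith)]
    norm_num
  -- Grönwall
  have hgron := le_gronwallBound_of_liminf_deriv_right_le (f' := gd)
    hgc (fun x hx r hr => (hgderiv x hx).liminf_right_slope_le hr)
    (le_of_eq hg0) hbound
  have hgzero : ∀ s ∈ Icc (0:ℝ) T, g s = 0 := by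
    intro s hs
    have h1 := hgron s hs
    rw [gronwallBound_ε0_δ0] at h1
    have h2 : 0 ≤ g s := by
      simp only [hg, hq]
      positivity
    linarith
  -- conclude nonnegativity
  have hnn : ∀ s ∈ Icc (0:ℝ) T, 0 ≤ nA s ∧ 0 ≤ nB s ∧ 0 ≤ nC s ∧ 0 ≤ nD s := by
    intro s hs
    have h1 := hgzero s hs
    have qa : 0 ≤ q (nA s) := by simp only [hq]; positivity
    have qb : 0 ≤ q (nB s) := by simp only [hq]; positivity
    have qc : 0 ≤ q (nC s) := by simp only [hq]; positivity
    have qd : 0 ≤ q (nD s) := by simp only [hq]; positivity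
    simp only [hg] at h1
    have ha : q (nA s) = 0 := by linarith
    have hb : q (nB s) = 0 := by linarith
    have hc : q (nC s) = 0 := by linarith
    have hd : q (nD s) = 0 := by linarith
    have key : ∀ y : ℝ, q y = 0 → 0 ≤ y := by
      intro y hy
      simp only [hq] at hy
      have := pow_eq_zero_iff (n := 2) (by norm_num) |>.mp hy
      have h2 : -y ≤ 0 := by
        rw [← this]; exact le_max_left _ _
      linarith
    exact ⟨key _ ha, key _ hb, key _ hc, key _ hd⟩
  intro t ht
  obtain ⟨ha, hb, hc, hd⟩ := hnn t ht
  have hsum := hS t ht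
  exact ⟨⟨ha, by linarith⟩, ⟨hb, by linarith⟩, ⟨hc, by linarith⟩, ⟨hd, by linarith⟩, hsum⟩
end
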